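/- On the Tchebyshev hypergroup (generated by Chebyshev polynomials of the first kind T_n), every generalized moment sequence of rank 2 with |α| ≤ 2 has the form: φ_{(0,0)}(n) = T_n(λ), φ_{(1,0)}(n) = c_{10} T_n'(λ), φ_{(0,1)}(n) = c_{01} T_n'(λ), φ_{(1,1)}(n) = c_{10}c_{01} T_n''(λ) + c_{11} T_n'(λ), φ_{(2,0)}(n) = c_{10}² T_n''(λ) + c_{20} T_n'(λ), φ_{(0,2)}(n) = c_{01}² T_n''(λ) + c_{02} T_n'(λ), where λ = φ_{(0,0)}(1) and c_{10}, c_{01}, c_{11}, c_{20}, c_{02} are the complex constants φ_{(1,0)}(1), φ_{(0,1)}(1), φ_{(1,1)}(1), φ_{(2,0)}(1), φ_{(0,2)}(1). -/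
import Mathlib


open Polynomial Polynomial.Chebyshev

noncomputable def mchoose {r : ℕ} (α β : Fin r → ℕ) : ℕ := ∏ i, Nat.choose (α i) (β i)

lemma chebTrec (n : ℕ) : T ℂ ((n+2 : ℕ) : ℤ) = 2 * X * T ℂ ((n+1 : ℕ) : ℤ) - T ℂ (n : ℤ) := by
  push_cast; exact T_add_two ℂ n

lemma chebDrec (n : ℕ) : derivative (T ℂ ((n+2:ℕ):ℤ)) =
    2 * T ℂ ((n+1:ℕ):ℤ) + 2 * X * derivative (T ℂ ((n+1:ℕ):ℤ)) - derivative (T ℂ (n:ℤ)) := by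
  rw [chebTrec]; simp [derivative_mul]

lemma chebD2rec (n : ℕ) : derivative (derivative (T ℂ ((n+2:ℕ):ℤ))) =
    4 * derivative (T ℂ ((n+1:ℕ):ℤ)) + 2 * X * derivative (derivative (T ℂ ((n+1:ℕ):ℤ)))
      - derivative (derivative (T ℂ (n:ℤ))) := by
  rw [chebDrec]; simp [derivative_mul]; ring

lemma aevalP (l : ℂ) (n : ℕ) : aeval l (T ℂ ((n+2:ℕ):ℤ)) =
    2 * l * aeval l (T ℂ ((n+1:ℕ):ℤ)) - aeval l (T ℂ (n:ℤ)) := by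
  rw [chebTrec]; simp

lemma aevalD (l : ℂ) (n : ℕ) : aeval l (derivative (T ℂ ((n+2:ℕ):ℤ))) =
    2 * aeval l (T ℂ ((n+1:ℕ):ℤ)) + 2 * l * aeval l (derivative (T ℂ ((n+1:ℕ):ℤ)))
      - aeval l (derivative (T ℂ (n:ℤ))) := by
  rw [chebDrec]; simp

lemma aevalD2 (l : ℂ) (n : ℕ) : aeval l (derivative (derivative (T ℂ ((n+2:ℕ):ℤ)))) =
    4 * aeval l (derivative (T ℂ ((n+1:ℕ):ℤ)))
      + 2 * l * aeval l (derivative (derivative (T ℂ ((n+1:ℕ):ℤ))))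
      - aeval l (derivative (derivative (T ℂ (n:ℤ)))) := by
  rw [chebD2rec]; simp

theorem chebyshev_moment_rank_two
    (φ : (Fin 2 → ℕ) → ℕ → ℂ)
    (h0 : φ ![0, 0] 0 = 1)
    (hmom : ∀ α : Fin 2 → ℕ, (∑ i, α i) ≤ 2 → ∀ m n : ℕ,
      (1 / 2 : ℂ) * φ α (m + n) + (1 / 2 : ℂ) * φ α (Nat.dist m n) =
        ∑ β ∈ Finset.Iic α, (mchoose α β : ℂ) * φ β m * φ (α - β) n) :
    ∀ n : ℕ,
      φ ![0, 0] n = Polynomial.aeval (φ ![0, 0] 1) (T ℂ n) ∧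
      φ ![1, 0] n = φ ![1, 0] 1 * Polynomial.aeval (φ ![0, 0] 1) (derivative (T ℂ n)) ∧
      φ ![0, 1] n = φ ![0, 1] 1 * Polynomial.aeval (φ ![0, 0] 1) (derivative (T ℂ n)) ∧
      φ ![1, 1] n = φ ![1, 0] 1 * φ ![0, 1] 1 *
          Polynomial.aeval (φ ![0, 0] 1) (derivative (derivative (T ℂ n))) +
        φ ![1, 1] 1 * Polynomial.aeval (φ ![0, 0] 1) (derivative (T ℂ n)) ∧
      φ ![2, 0] n = (φ ![1, 0] 1) ^ 2 *
          Polynomial.aeval (φ ![0, 0] 1) (derivative (derivative (T ℂ n))) +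
        φ ![2, 0] 1 * Polynomial.aeval (φ ![0, 0] 1) (derivative (T ℂ n)) ∧
      φ ![0, 2] n = (φ ![0, 1] 1) ^ 2 *
          Polynomial.aeval (φ ![0, 0] 1) (derivative (derivative (T ℂ n))) +
        φ ![0, 2] 1 * Polynomial.aeval (φ ![0, 0] 1) (derivative (T ℂ n)) := by
  set l := φ ![0, 0] 1 with hl
  -- expanded sums
  have e00 : ∀ m n : ℕ, (1/2 : ℂ) * φ ![0,0] (m+n) + (1/2 : ℂ) * φ ![0,0] (Nat.dist m n) =
      φ ![0,0] m * φ ![0,0] n := by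
    intro m n
    have h := hmom ![0,0] (by decide) m n
    rw [show Finset.Iic ![0,0] = {![0,0]} from by decide, Finset.sum_singleton,
      show (![0,0] - ![0,0] : Fin 2 → ℕ) = ![0,0] from by decide,
      show mchoose ![0,0] ![0,0] = 1 from by decide] at h
    simpa using h
  have e10 : ∀ m n : ℕ, (1/2 : ℂ) * φ ![1,0] (m+n) + (1/2 : ℂ) * φ ![1,0] (Nat.dist m n) =
      φ ![0,0] m * φ ![1,0] n + φ ![1,0] m * φ ![0,0] n := by
    intro m n
    have h := hmom ![1,0] (by decide) m n
    rw [show Finset.Iic ![1,0] = {![0,0], ![1,0]} from by decide,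
      Finset.sum_insert (by decide), Finset.sum_singleton,
      show (![1,0] - ![0,0] : Fin 2 → ℕ) = ![1,0] from by decide,
      show (![1,0] - ![1,0] : Fin 2 → ℕ) = ![0,0] from by decide,
      show mchoose ![1,0] ![0,0] = 1 from by decide,
      show mchoose ![1,0] ![1,0] = 1 from by decide] at h
    simpa using h
  have e01 : ∀ m n : ℕ, (1/2 : ℂ) * φ ![0,1] (m+n) + (1/2 : ℂ) * φ ![0,1] (Nat.dist m n) =
      φ ![0,0] m * φ ![0,1] n + φ ![0,1] m * φ ![0,0] n := by
    intro m n
    have h := hmom ![0,1] (by decide) m n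
    rw [show Finset.Iic ![0,1] = {![0,0], ![0,1]} from by decide,
      Finset.sum_insert (by decide), Finset.sum_singleton,
      show (![0,1] - ![0,0] : Fin 2 → ℕ) = ![0,1] from by decide,
      show (![0,1] - ![0,1] : Fin 2 → ℕ) = ![0,0] from by decide,
      show mchoose ![0,1] ![0,0] = 1 from by decide,
      show mchoose ![0,1] ![0,1] = 1 from by decide] at h
    simpa using h
  have e11 : ∀ m n : ℕ, (1/2 : ℂ) * φ ![1,1] (m+n) + (1/2 : ℂ) * φ ![1,1] (Nat.dist m n) =
      φ ![0,0] m * φ ![1,1] n + φ ![1,0] m * φ ![0,1] n + φ ![0,1] m * φ ![1,0] n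
        + φ ![1,1] m * φ ![0,0] n := by
    intro m n
    have h := hmom ![1,1] (by decide) m n
    rw [show Finset.Iic ![1,1] = {![0,0], ![1,0], ![0,1], ![1,1]} from by decide,
      Finset.sum_insert (by decide), Finset.sum_insert (by decide),
      Finset.sum_insert (by decide), Finset.sum_singleton,
      show (![1,1] - ![0,0] : Fin 2 → ℕ) = ![1,1] from by decide,
      show (![1,1] - ![1,0] : Fin 2 → ℕ) = ![0,1] from by decide,
      show (![1,1] - ![0,1] : Fin 2 → ℕ) = ![1,0] from by decide,
      show (![1,1] - ![1,1] : Fin 2 → ℕ) = ![0,0] from by decide,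
      show mchoose ![1,1] ![0,0] = 1 from by decide,
      show mchoose ![1,1] ![1,0] = 1 from by decide,
      show mchoose ![1,1] ![0,1] = 1 from by decide,
      show mchoose ![1,1] ![1,1] = 1 from by decide] at h
    push_cast at h
    linear_combination h
  have e20 : ∀ m n : ℕ, (1/2 : ℂ) * φ ![2,0] (m+n) + (1/2 : ℂ) * φ ![2,0] (Nat.dist m n) =
      φ ![0,0] m * φ ![2,0] n + 2 * (φ ![1,0] m * φ ![1,0] n)
        + φ ![2,0] m * φ ![0,0] n := by
    intro m n
    have h := hmom ![2,0] (by decide) m n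
    rw [show Finset.Iic ![2,0] = {![0,0], ![1,0], ![2,0]} from by decide,
      Finset.sum_insert (by decide), Finset.sum_insert (by decide), Finset.sum_singleton,
      show (![2,0] - ![0,0] : Fin 2 → ℕ) = ![2,0] from by decide,
      show (![2,0] - ![1,0] : Fin 2 → ℕ) = ![1,0] from by decide,
      show (![2,0] - ![2,0] : Fin 2 → ℕ) = ![0,0] from by decide,
      show mchoose ![2,0] ![0,0] = 1 from by decide,
      show mchoose ![2,0] ![1,0] = 2 from by decide,
      show mchoose ![2,0] ![2,0] = 1 from by decide] at h
    push_cast at h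
    linear_combination h
  have e02 : ∀ m n : ℕ, (1/2 : ℂ) * φ ![0,2] (m+n) + (1/2 : ℂ) * φ ![0,2] (Nat.dist m n) =
      φ ![0,0] m * φ ![0,2] n + 2 * (φ ![0,1] m * φ ![0,1] n)
        + φ ![0,2] m * φ ![0,0] n := by
    intro m n
    have h := hmom ![0,2] (by decide) m n
    rw [show Finset.Iic ![0,2] = {![0,0], ![0,1], ![0,2]} from by decide,
      Finset.sum_insert (by decide), Finset.sum_insert (by decide), Finset.sum_singleton,
      show (![0,2] - ![0,0] : Fin 2 → ℕ) = ![0,2] from by decide,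
      show (![0,2] - ![0,1] : Fin 2 → ℕ) = ![0,1] from by decide,
      show (![0,2] - ![0,2] : Fin 2 → ℕ) = ![0,0] from by decide,
      show mchoose ![0,2] ![0,0] = 1 from by decide,
      show mchoose ![0,2] ![0,1] = 2 from by decide,
      show mchoose ![0,2] ![0,2] = 1 from by decide] at h
    push_cast at h
    linear_combination h
  have hdist : ∀ n : ℕ, Nat.dist (n+1) 1 = n := by intro n; simp [Nat.dist]
  -- zero values
  have z10 : φ ![1,0] 0 = 0 := by
    have h := e10 0 0; norm_num [h0] at h; linear_combination -h
  have z01 : φ ![0,1] 0 = 0 := by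
    have h := e01 0 0; norm_num [h0] at h; linear_combination -h
  have z11 : φ ![1,1] 0 = 0 := by
    have h := e11 0 0; norm_num [h0, z10, z01] at h; linear_combination -h
  have z20 : φ ![2,0] 0 = 0 := by
    have h := e20 0 0; norm_num [h0, z10] at h; linear_combination -h
  have z02 : φ ![0,2] 0 = 0 := by
    have h := e02 0 0; norm_num [h0, z01] at h; linear_combination -h
  -- recurrences
  have k00 : ∀ n : ℕ, φ ![0,0] (n+2) = 2 * l * φ ![0,0] (n+1) - φ ![0,0] n := by
    intro n; have h := e00 (n+1) 1; rw [hdist] at h; rw [← hl] at h; linear_combination 2 * h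
  have k10 : ∀ n : ℕ, φ ![1,0] (n+2) =
      2 * (φ ![0,0] (n+1) * φ ![1,0] 1 + φ ![1,0] (n+1) * l) - φ ![1,0] n := by
    intro n; have h := e10 (n+1) 1; rw [hdist] at h; rw [← hl] at h; linear_combination 2 * h
  have k01 : ∀ n : ℕ, φ ![0,1] (n+2) =
      2 * (φ ![0,0] (n+1) * φ ![0,1] 1 + φ ![0,1] (n+1) * l) - φ ![0,1] n := by
    intro n; have h := e01 (n+1) 1; rw [hdist] at h; rw [← hl] at h; linear_combination 2 * h
  have k11 : ∀ n : ℕ, φ ![1,1] (n+2) =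
      2 * (φ ![0,0] (n+1) * φ ![1,1] 1 + φ ![1,0] (n+1) * φ ![0,1] 1
        + φ ![0,1] (n+1) * φ ![1,0] 1 + φ ![1,1] (n+1) * l) - φ ![1,1] n := by
    intro n; have h := e11 (n+1) 1; rw [hdist] at h; rw [← hl] at h; linear_combination 2 * h
  have k20 : ∀ n : ℕ, φ ![2,0] (n+2) =
      2 * (φ ![0,0] (n+1) * φ ![2,0] 1 + 2 * (φ ![1,0] (n+1) * φ ![1,0] 1)
        + φ ![2,0] (n+1) * l) - φ ![2,0] n := by
    intro n; have h := e20 (n+1) 1; rw [hdist] at h; rw [← hl] at h; linear_combination 2 * h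
  have k02 : ∀ n : ℕ, φ ![0,2] (n+2) =
      2 * (φ ![0,0] (n+1) * φ ![0,2] 1 + 2 * (φ ![0,1] (n+1) * φ ![0,1] 1)
        + φ ![0,2] (n+1) * l) - φ ![0,2] n := by
    intro n; have h := e02 (n+1) 1; rw [hdist] at h; rw [← hl] at h; linear_combination 2 * h
  -- base case evaluations
  have b0P : aeval l (T ℂ ((0:ℕ):ℤ)) = 1 := by norm_num
  have b1P : aeval l (T ℂ ((1:ℕ):ℤ)) = l := by norm_num
  have b0D : aeval l (derivative (T ℂ ((0:ℕ):ℤ))) = 0 := by norm_num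
  have b1D : aeval l (derivative (T ℂ ((1:ℕ):ℤ))) = 1 := by norm_num
  have b0D2 : aeval l (derivative (derivative (T ℂ ((0:ℕ):ℤ)))) = 0 := by norm_num
  have b1D2 : aeval l (derivative (derivative (T ℂ ((1:ℕ):ℤ)))) = 0 := by norm_num
  -- the six closed forms
  have H00 : ∀ n : ℕ, φ ![0,0] n = aeval l (T ℂ (n:ℤ)) := by
    intro n
    induction n using Nat.twoStepInduction with
    | zero => rw [h0, b0P]
    | one => rw [← hl, b1P]
    | more n ih1 ih2 => rw [k00, ih1, ih2, aevalP]
  have H10 : ∀ n : ℕ, φ ![1,0] n = φ ![1,0] 1 * aeval l (derivative (T ℂ (n:ℤ))) := by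
    intro n
    induction n using Nat.twoStepInduction with
    | zero => rw [z10, b0D]; ring
    | one => rw [b1D]; ring
    | more n ih1 ih2 => rw [k10 n, ih1, ih2, H00 (n+1), aevalD]; ring
  have H01 : ∀ n : ℕ, φ ![0,1] n = φ ![0,1] 1 * aeval l (derivative (T ℂ (n:ℤ))) := by
    intro n
    induction n using Nat.twoStepInduction with
    | zero => rw [z01, b0D]; ring
    | one => rw [b1D]; ring
    | more n ih1 ih2 => rw [k01 n, ih1, ih2, H00 (n+1), aevalD]; ring
  have H11 : ∀ n : ℕ, φ ![1,1] n = φ ![1,0] 1 * φ ![0,1] 1 *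
      aeval l (derivative (derivative (T ℂ (n:ℤ)))) +
      φ ![1,1] 1 * aeval l (derivative (T ℂ (n:ℤ))) := by
    intro n
    induction n using Nat.twoStepInduction with
    | zero => rw [z11, b0D, b0D2]; ring
    | one => rw [b1D, b1D2]; ring
    | more n ih1 ih2 => rw [k11 n, ih1, ih2, H00 (n+1), H10 (n+1), H01 (n+1), aevalD2, aevalD]; ring
  have H20 : ∀ n : ℕ, φ ![2,0] n = (φ ![1,0] 1) ^ 2 *
      aeval l (derivative (derivative (T ℂ (n:ℤ)))) +
      φ ![2,0] 1 * aeval l (derivative (T ℂ (n:ℤ))) := by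
    intro n
    induction n using Nat.twoStepInduction with
    | zero => rw [z20, b0D, b0D2]; ring
    | one => rw [b1D, b1D2]; ring
    | more n ih1 ih2 => rw [k20 n, ih1, ih2, H00 (n+1), H10 (n+1), aevalD2, aevalD]; ring
  have H02 : ∀ n : ℕ, φ ![0,2] n = (φ ![0,1] 1) ^ 2 *
      aeval l (derivative (derivative (T ℂ (n:ℤ)))) +
      φ ![0,2] 1 * aeval l (derivative (T ℂ (n:ℤ))) := by
    intro n
    induction n using Nat.twoStepInduction with
    | zero => rw [z02, b0D, b0D2]; ring
    | one => rw [b1D, b1D2]; ring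
    | more n ih1 ih2 => rw [k02 n, ih1, ih2, H00 (n+1), H01 (n+1), aevalD2, aevalD]; ring
  exact fun n => ⟨H00 n, H10 n, H01 n, H11 n, H20 n, H02 n⟩
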